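/- Let m, n ≥ 2 and let k divide r. The graph Γ^k_{m,n}(r) is isomorphic to the lexicographic product Γ^k_{m,n}(k)[complement of K_{r/k}], and consequently its independence number equals max{r, nr/k}. -/

import Mathlib

/-- A set of vertices is a coclique (independent set) of a graph. -/
def IsCoclique {V : Type*} (G : SimpleGraph V) (s : Set V) : Prop :=
  ∀ ⦃a⦄, a ∈ s → ∀ ⦃b⦄, b ∈ s → ¬ G.Adj a b

/-- The independence number of a graph: the maximum size of a coclique. -/
noncomputable def indepNum {V : Type*} [Fintype V] (G : SimpleGraph V) : ℕ :=
  sSup {n | ∃ s : Finset V, IsCoclique G ↑s ∧ s.card = n}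

/-- The lexicographic product `X[Y]` of two graphs: `(x,y) ~ (x',y')` iff
`x ~ x'` in `X`, or `x = x'` and `y ~ y'` in `Y`. -/
def lexProd {V W : Type*} (X : SimpleGraph V) (Y : SimpleGraph W) :
    SimpleGraph (V × W) where
  Adj a b := X.Adj a.1 b.1 ∨ (a.1 = b.1 ∧ Y.Adj a.2 b.2)
  symm := by
    constructor
    intro a b h
    rcases h with h | ⟨h1, h2⟩
    · exact Or.inl h.symm
    · exact Or.inr ⟨h1.symm, h2.symm⟩
  loopless := by
    constructor
    intro a h
    rcases h with h | ⟨_, h2⟩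
    · exact X.loopless.irrefl _ h
    · exact Y.loopless.irrefl _ h2

/-- The graph `Γ^k_{m,n}(r)` with `r = k·s`: elements of `[r]` are encoded as pairs
`(a₁, a₂) ∈ [k] × [s]`, with the uniform partition into the `k` parts given by the
first coordinate.  `(a,b,c) ~ (a',b',c')` iff (`c = c'` and `b ≠ b'`) or
(`c ≠ c'` and `a`, `a'` lie in different parts). -/
def GammaR (k s m n : ℕ) : SimpleGraph ((Fin k × Fin s) × Fin m × Fin n) where
  Adj v w := (v.2.2 = w.2.2 ∧ v.2.1 ≠ w.2.1) ∨ (v.2.2 ≠ w.2.2 ∧ v.1.1 ≠ w.1.1)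
  symm := by
    constructor
    intro v w h
    rcases h with ⟨h1, h2⟩ | ⟨h1, h2⟩
    · exact Or.inl ⟨h1.symm, h2.symm⟩
    · exact Or.inr ⟨fun he => h1 he.symm, fun he => h2 he.symm⟩
  loopless := by
    constructor
    intro v h
    rcases h with ⟨_, h2⟩ | ⟨h1, _⟩
    · exact h2 rfl
    · exact h1 rfl

/-- The graph `Γ^k_{m,n}(k)` (partition of `[k]` into singletons). -/
def Gamma (k m n : ℕ) : SimpleGraph (Fin k × Fin m × Fin n) where
  Adj v w := (v.2.2 = w.2.2 ∧ v.2.1 ≠ w.2.1) ∨ (v.2.2 ≠ w.2.2 ∧ v.1 ≠ w.1)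
  symm := by
    constructor
    intro v w h
    rcases h with ⟨h1, h2⟩ | ⟨h1, h2⟩
    · exact Or.inl ⟨h1.symm, h2.symm⟩
    · exact Or.inr ⟨fun he => h1 he.symm, fun he => h2 he.symm⟩
  loopless := by
    constructor
    intro v h
    rcases h with ⟨_, h2⟩ | ⟨h1, _⟩
    · exact h2 rfl
    · exact h1 rfl

section Aux

variable (k s m n : ℕ)

lemma gammaR_not_adj {v w : (Fin k × Fin s) × Fin m × Fin n}
    (h : ¬ (GammaR k s m n).Adj v w) :
    (v.2.2 = w.2.2 → v.2.1 = w.2.1) ∧ (v.2.2 ≠ w.2.2 → v.1.1 = w.1.1) := by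
  constructor
  · intro hc
    by_contra hb
    exact h (Or.inl ⟨hc, hb⟩)
  · intro hc
    by_contra ha
    exact h (Or.inr ⟨hc, ha⟩)

lemma coclique_card_le {t : Finset ((Fin k × Fin s) × Fin m × Fin n)}
    (ht : IsCoclique (GammaR k s m n) ↑t) : t.card ≤ max (k * s) (n * s) := by
  by_cases hc : ∀ v ∈ t, ∀ w ∈ t, v.2.2 = w.2.2
  · -- all c equal; inject into Fin k × Fin s
    have h1 : t.card ≤ (Finset.univ : Finset (Fin k × Fin s)).card := by
      apply Finset.card_le_card_of_injOn (fun v => v.1)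
        (fun _ _ => Finset.mem_univ _)
      intro v hv w hw h
      simp only [Finset.mem_coe] at hv hw
      have hcc : v.2.2 = w.2.2 := hc v hv w hw
      by_cases hvw : v = w
      · exact hvw
      · have hna := gammaR_not_adj k s m n (ht hv hw)
        have hb : v.2.1 = w.2.1 := hna.1 hcc
        exact Prod.ext h (Prod.ext hb hcc)
    exact (by simpa using h1 : t.card ≤ k * s).trans (le_max_left _ _)
  · push_neg at hc
    obtain ⟨v0, hv0, w0, hw0, hcw⟩ := hc
    -- first coordinate is constant
    have ha : ∀ u ∈ t, u.1.1 = v0.1.1 := by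
      intro u hu
      by_cases hcu : u.2.2 = v0.2.2
      · have h1 : u.1.1 = w0.1.1 :=
          (gammaR_not_adj k s m n (ht hu hw0)).2 (hcu ▸ hcw)
        have h2 : v0.1.1 = w0.1.1 :=
          (gammaR_not_adj k s m n (ht hv0 hw0)).2 hcw
        rw [h1, h2]
      · exact (gammaR_not_adj k s m n (ht hu hv0)).2 hcu
    have h1 : t.card ≤ (Finset.univ : Finset (Fin s × Fin n)).card := by
      apply Finset.card_le_card_of_injOn (fun v => (v.1.2, v.2.2))
        (fun _ _ => Finset.mem_univ _)
      intro v hv w hw h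
      simp only [Finset.mem_coe] at hv hw
      simp only [Prod.mk.injEq] at h
      obtain ⟨h2, h3⟩ := h
      have hb : v.2.1 = w.2.1 := (gammaR_not_adj k s m n (ht hv hw)).1 h3
      have ha1 : v.1.1 = w.1.1 := by rw [ha v hv, ha w hw]
      exact Prod.ext (Prod.ext ha1 h2) (Prod.ext hb h3)
    have : t.card ≤ s * n := by simpa using h1
    calc t.card ≤ s * n := this
      _ = n * s := Nat.mul_comm s n
      _ ≤ max (k * s) (n * s) := le_max_right _ _

end Aux

/-- `Γ^k_{m,n}(r) ≅ Γ^k_{m,n}(k)[complement of K_{r/k}]`, and consequently its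
independence number is `max {r, nr/k}` (here `r = k·s`, so this is
`max {k·s, n·s}`). -/
theorem gammaR_iso_lexProd_and_indepNum (k s m n : ℕ)
    (hk : 1 ≤ k) (hs : 1 ≤ s) (hm : 2 ≤ m) (hn : 2 ≤ n) :
    Nonempty (GammaR k s m n ≃g lexProd (Gamma k m n) (⊥ : SimpleGraph (Fin s))) ∧
      indepNum (GammaR k s m n) = max (k * s) (n * s) := by
  have hk0 : 0 < k := hk
  have hm0 : 0 < m := by omega
  have hn0 : 0 < n := by omega
  constructor
  · refine ⟨⟨⟨fun v => ((v.1.1, v.2), v.1.2), fun w => ((w.1.1, w.2), w.1.2),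
      fun v => rfl, fun w => rfl⟩, ?_⟩⟩
    intro v w
    simp only [Equiv.coe_fn_mk, lexProd, Gamma, GammaR, SimpleGraph.bot_adj,
      Prod.mk.injEq]
    tauto
  · have hMmem : max (k * s) (n * s) ∈
        {N | ∃ t : Finset ((Fin k × Fin s) × Fin m × Fin n),
          IsCoclique (GammaR k s m n) ↑t ∧ t.card = N} := by
      rcases le_total (k * s) (n * s) with hle | hle
      · refine ⟨(Finset.univ : Finset (Fin s × Fin n)).map
          ⟨fun p => ((⟨0, hk0⟩, p.1), ⟨0, hm0⟩, p.2), ?_⟩, ?_, ?_⟩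
        · intro p q h
          simp only [Prod.mk.injEq] at h
          exact Prod.ext h.1.2 h.2.2
        · intro a ha b hb hadj
          simp only [Finset.coe_map, Set.mem_image, Finset.coe_univ,
            Set.image_univ, Set.mem_range, Function.Embedding.coeFn_mk] at ha hb
          obtain ⟨p, rfl⟩ := ha
          obtain ⟨q, rfl⟩ := hb
          rcases hadj with ⟨_, hb'⟩ | ⟨_, ha'⟩
          · exact hb' rfl
          · exact ha' rfl
        · rw [Finset.card_map]
          simp [max_eq_right hle, Nat.mul_comm s n]
      · refine ⟨(Finset.univ : Finset (Fin k × Fin s)).map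
          ⟨fun p => (p, ⟨0, hm0⟩, ⟨0, hn0⟩), ?_⟩, ?_, ?_⟩
        · intro p q h
          simp only [Prod.mk.injEq] at h
          exact h.1
        · intro a ha b hb hadj
          simp only [Finset.coe_map, Set.mem_image, Finset.coe_univ,
            Set.image_univ, Set.mem_range, Function.Embedding.coeFn_mk] at ha hb
          obtain ⟨p, rfl⟩ := ha
          obtain ⟨q, rfl⟩ := hb
          rcases hadj with ⟨_, hb'⟩ | ⟨hc', _⟩
          · exact hb' rfl
          · exact hc' rfl
        · rw [Finset.card_map]
          simp [max_eq_left hle]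
    have hub : ∀ N ∈ {N | ∃ t : Finset ((Fin k × Fin s) × Fin m × Fin n),
        IsCoclique (GammaR k s m n) ↑t ∧ t.card = N}, N ≤ max (k * s) (n * s) := by
      rintro N ⟨t, ht, rfl⟩
      exact coclique_card_le k s m n ht
    unfold indepNum
    exact le_antisymm (csSup_le ⟨_, hMmem⟩ hub) (le_csSup ⟨_, hub⟩ hMmem)
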